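/- Let 0 < T₁ ≤ T₂ and let A : [T₁, T₂] → ℝ be a lower semicontinuous function with A(t) ≥ 0 for all t ∈ [T₁, T₂]. Assume that for every t₀ ∈ [T₁, T₂) the upper right Dini derivative satisfies D⁺A(t₀) ≤ (3/(4t₀))·A(t₀) − 4π. Then for every t ∈ [T₁, T₂] one has t⁻¹·A(t) ≤ T₁⁻¹·A(T₁) − 4π·(log t − log T₁). -/

import Mathlib

open Filter Set Topology

/-- The upper right Dini derivative `D⁺f(t) = limsup_{h → 0⁺} (f(t+h) - f(t))/h`,
taking values in the extended reals. -/
noncomputable def upperDiniDeriv (f : ℝ → ℝ) (t : ℝ) : EReal :=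
  Filter.limsup (fun h : ℝ => (((f (t + h) - f t) / h : ℝ) : EReal))
    (nhdsWithin 0 (Set.Ioi 0))

theorem stmt0 (T₁ T₂ : ℝ) (hT₁ : 0 < T₁) (hT : T₁ ≤ T₂) (A : ℝ → ℝ)
    (hlsc : LowerSemicontinuousOn A (Set.Icc T₁ T₂))
    (hnonneg : ∀ t ∈ Set.Icc T₁ T₂, 0 ≤ A t)
    (hdini : ∀ t₀ ∈ Set.Ico T₁ T₂,
      upperDiniDeriv A t₀ ≤ (((3 / (4 * t₀)) * A t₀ - 4 * Real.pi : ℝ) : EReal)) :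
    ∀ t ∈ Set.Icc T₁ T₂,
      t⁻¹ * A t ≤ T₁⁻¹ * A T₁ - 4 * Real.pi * (Real.log t - Real.log T₁) := by
  have hπ : (0:ℝ) < Real.pi := Real.pi_pos
  set C : ℝ := T₁⁻¹ * A T₁ with hC
  set LT : ℝ := Real.log T₁ with hLT
  -- key lemma with ε slack
  have key : ∀ ε : ℝ, 0 < ε → ∀ t ∈ Set.Icc T₁ T₂,
      A t ≤ t * (C - 4 * Real.pi * (Real.log t - LT) + ε * (t - T₁)) := by
    intro ε hε
    set ψ : ℝ → ℝ := fun x => x * (C - 4 * Real.pi * (Real.log x - LT) + ε * (x - T₁)) with hψ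
    set s : Set ℝ := {x | A x ≤ ψ x} with hsdef
    have hψcont : ∀ x₀ : ℝ, x₀ ≠ 0 → ContinuousAt ψ x₀ := by
      intro x₀ hx₀
      exact continuousAt_id.mul
        (((continuousAt_const.sub (continuousAt_const.mul
          ((Real.continuousAt_log hx₀).sub continuousAt_const))).add
          (continuousAt_const.mul (continuousAt_id.sub continuousAt_const))))
    have hclosed : IsClosed (s ∩ Set.Icc T₁ T₂) := by
      apply isClosed_of_closure_subset
      intro x₀ hx₀
      have hIcc : x₀ ∈ Set.Icc T₁ T₂ := by
        have := closure_mono (inter_subset_right (s := s) (t := Set.Icc T₁ T₂)) hx₀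
        rwa [isClosed_Icc.closure_eq] at this
      refine ⟨?_, hIcc⟩
      by_contra hlt
      have hlt' : ψ x₀ < A x₀ := lt_of_not_ge hlt
      set y : ℝ := (ψ x₀ + A x₀) / 2 with hy
      have hne : (𝓝[s ∩ Set.Icc T₁ T₂] x₀).NeBot := mem_closure_iff_nhdsWithin_neBot.mp hx₀
      have h1 : ∀ᶠ x in 𝓝[Set.Icc T₁ T₂] x₀, y < A x := hlsc x₀ hIcc y (by simp [hy]; linarith)
      have h2 : ∀ᶠ x in 𝓝 x₀, ψ x < y :=
        (hψcont x₀ (by have := hIcc.1; exact ne_of_gt (lt_of_lt_of_le hT₁ this))).eventually_lt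
          continuousAt_const (by simp [hy]; linarith)
      have h3 : ∀ᶠ x in 𝓝[s ∩ Set.Icc T₁ T₂] x₀, y < A x :=
        h1.filter_mono (nhdsWithin_mono _ inter_subset_right)
      have h4 : ∀ᶠ x in 𝓝[s ∩ Set.Icc T₁ T₂] x₀, ψ x < y := h2.filter_mono nhdsWithin_le_nhds
      have h5 : ∀ᶠ x in 𝓝[s ∩ Set.Icc T₁ T₂] x₀, A x ≤ ψ x :=
        eventually_mem_nhdsWithin.mono fun x hx => hx.1
      obtain ⟨x, hxy, hxψ, hxA⟩ := (h3.and (h4.and h5)).exists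
      linarith
    have hT₁s : T₁ ∈ s := by
      have : ψ T₁ = A T₁ := by
        simp only [hψ, hC]
        field_simp
        simp [hLT]
      simp only [hsdef, Set.mem_setOf_eq, this, le_refl]
    have hsub : Set.Icc T₁ T₂ ⊆ s := by
      apply hclosed.Icc_subset_of_forall_exists_gt hT₁s
      rintro x ⟨hxs, hxI⟩ y hxy
      have hx0 : 0 < x := lt_of_lt_of_le hT₁ hxI.1
      have hxIcc : x ∈ Set.Icc T₁ T₂ := ⟨hxI.1, hxI.2.le⟩
      have hA0 : 0 ≤ A x := hnonneg x hxIcc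
      have hAx : A x ≤ ψ x := hxs
      -- Dini derivative bound
      have hd := hdini x hxI
      have hlt : upperDiniDeriv A x
          < (((3 / (4 * x)) * A x - 4 * Real.pi + ε * x / 2 : ℝ) : EReal) := by
        refine lt_of_le_of_lt hd ?_
        exact_mod_cast (by nlinarith : (3 / (4 * x)) * A x - 4 * Real.pi
          < (3 / (4 * x)) * A x - 4 * Real.pi + ε * x / 2)
      rw [upperDiniDeriv] at hlt
      have hev := eventually_lt_of_limsup_lt hlt
      have hev' : ∀ᶠ h in 𝓝[>] (0:ℝ),
          (A (x + h) - A x) / h < (3 / (4 * x)) * A x - 4 * Real.pi + ε * x / 2 :=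
        hev.mono fun h hh => by exact_mod_cast hh
      set r : ℝ := min (y - x) (ε * x ^ 2 / (8 * Real.pi)) with hr
      have hr0 : 0 < r := lt_min (by linarith [mem_Ioi.mp hxy]) (by positivity)
      have hevr : ∀ᶠ h in 𝓝[>] (0:ℝ), h ∈ Set.Ioo 0 r :=
        Filter.eventually_of_mem (Ioo_mem_nhdsGT_of_mem ⟨le_rfl, hr0⟩) fun z hz => hz
      obtain ⟨h, hhd, hh0, hhr⟩ := (hev'.and hevr).exists
      have hxh0 : 0 < x + h := by linarith
      have hhy : x + h ≤ y := by
        have : h < y - x := lt_of_lt_of_le hhr (min_le_left _ _)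
        linarith
      have hh8 : 8 * Real.pi * h ≤ ε * x ^ 2 := by
        have : h ≤ ε * x ^ 2 / (8 * Real.pi) := le_of_lt (lt_of_lt_of_le hhr (min_le_right _ _))
        rw [le_div_iff₀ (by positivity)] at this
        linarith
      -- step 1: bound on A (x+h)
      have step1 : A (x + h) ≤ A x + h * ((3 / (4 * x)) * A x - 4 * Real.pi + ε * x / 2) := by
        rw [div_lt_iff₀ hh0] at hhd
        linarith
      -- log bound
      have hlog : Real.log (x + h) - Real.log x ≤ h / x := by
        have h1 : Real.log ((x + h) / x) ≤ (x + h) / x - 1 :=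
          Real.log_le_sub_one_of_pos (by positivity)
        rw [Real.log_div (by positivity) (ne_of_gt hx0)] at h1
        have : (x + h) / x - 1 = h / x := by field_simp; ring
        linarith [this ▸ h1]
      set P : ℝ := C - 4 * Real.pi * (Real.log x - LT) + ε * (x - T₁) with hP
      have hAxP : A x ≤ x * P := hAx
      -- step 2
      have step2 : P + ε * h - 4 * Real.pi * (h / x)
          ≤ C - 4 * Real.pi * (Real.log (x + h) - LT) + ε * (x + h - T₁) := by
        have hm : 4 * Real.pi * (Real.log (x + h) - Real.log x) ≤ 4 * Real.pi * (h / x) :=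
          mul_le_mul_of_nonneg_left hlog (by positivity)
        simp only [hP]
        linarith
      have step3 : (x + h) * (P + ε * h - 4 * Real.pi * (h / x)) ≤ ψ (x + h) :=
        mul_le_mul_of_nonneg_left step2 hxh0.le
      -- step 4, multiplied by x
      have step4 : A x + h * ((3 / (4 * x)) * A x - 4 * Real.pi + ε * x / 2)
          ≤ (x + h) * (P + ε * h - 4 * Real.pi * (h / x)) := by
        rw [← mul_le_mul_iff_right₀ hx0]
        have key4 : x * (A x + h * ((3 / (4 * x)) * A x - 4 * Real.pi + ε * x / 2))
            = x * A x + h * (3 / 4 * A x) - 4 * Real.pi * h * x + ε * x ^ 2 * h / 2 := by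
          field_simp
          ring
        have key5 : x * ((x + h) * (P + ε * h - 4 * Real.pi * (h / x)))
            = x ^ 2 * P + x * h * P + ε * x ^ 2 * h + ε * x * h ^ 2
              - 4 * Real.pi * x * h - 4 * Real.pi * h ^ 2 := by
          field_simp
          ring
        rw [key4, key5]
        clear_value P C LT
        have p1 : x * A x ≤ x * (x * P) := mul_le_mul_of_nonneg_left hAxP hx0.le
        have p2 : h * A x ≤ h * (x * P) := mul_le_mul_of_nonneg_left hAxP hh0.le
        have p3 : (h / 2) * (8 * Real.pi * h) ≤ (h / 2) * (ε * x ^ 2) :=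
          mul_le_mul_of_nonneg_left hh8 (by positivity)
        have p4 : 0 ≤ h * A x := mul_nonneg hh0.le hA0
        have p5 : 0 ≤ ε * x * h ^ 2 := by positivity
        linarith [p1, p2, p3, p4, p5]
      refine ⟨x + h, ?_, lt_add_of_pos_right x hh0, hhy⟩
      exact le_trans step1 (le_trans step4 step3)
    intro t ht
    exact hsub ht
  -- pass to the limit ε → 0
  intro t ht
  have ht0 : 0 < t := lt_of_lt_of_le hT₁ ht.1
  have hkey : ∀ ε : ℝ, 0 < ε →
      t⁻¹ * A t ≤ C - 4 * Real.pi * (Real.log t - LT) + ε * (t - T₁) := by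
    intro ε hε
    rw [inv_mul_le_iff₀ ht0]
    exact key ε hε t ht
  have hfin : ∀ δ : ℝ, 0 < δ → t⁻¹ * A t ≤ C - 4 * Real.pi * (Real.log t - LT) + δ := by
    intro δ hδ
    have htT : (0:ℝ) ≤ t - T₁ := by linarith [ht.1]
    have hden : (0:ℝ) < t - T₁ + 1 := by linarith
    have hε0 : 0 < δ / (t - T₁ + 1) := by positivity
    have hb : δ / (t - T₁ + 1) * (t - T₁) ≤ δ := by
      rw [div_mul_eq_mul_div, div_le_iff₀ hden]
      nlinarith
    linarith [hkey (δ / (t - T₁ + 1)) hε0]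
  exact le_of_forall_pos_le_add hfin
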